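/- Let n be even, k = n/2, and j = ηn with η ≤ 1/10. If i ∈ [k] satisfies ⌈(k-i)/2⌉ < j, then binom(k-i, ⌈(k-i)/2⌉) / binom(k,j) ≤ (1 - η/2)^i. -/

import Mathlib

open Finset

private lemma aux_choose_le_two_pow (n r : ℕ) : n.choose r ≤ 2 ^ n := by
  rcases le_or_gt r n with h | h
  · calc n.choose r ≤ ∑ m ∈ range (n + 1), n.choose m :=
        Finset.single_le_sum (fun m _ => Nat.zero_le _) (mem_range.2 (by omega))
      _ = 2 ^ n := Nat.sum_range_choose n
  · simp [Nat.choose_eq_zero_of_lt h]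

private lemma aux_pow_le_mul_choose : ∀ (j k : ℕ), j ≤ k → k ^ j ≤ j ^ j * k.choose j := by
  intro j
  induction j with
  | zero => simp
  | succ j ih =>
    intro k hk
    obtain ⟨k, rfl⟩ : ∃ m, k = m + 1 := ⟨k - 1, by omega⟩
    have hjk : j ≤ k := by omega
    have ih' := ih k hjk
    have hid : (k + 1) * Nat.choose k j = Nat.choose (k + 1) (j + 1) * (j + 1) :=
      Nat.add_one_mul_choose_eq k j
    -- multiply by (j+1) * j^j and compare
    have hbase : (k + 1) * j ≤ (j + 1) * k := by nlinarith
    have hpow : ((k + 1) * j) ^ j ≤ ((j + 1) * k) ^ j := Nat.pow_le_pow_left hbase j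
    rw [mul_pow, mul_pow] at hpow
    have key : (k + 1) ^ (j + 1) * ((j + 1) * j ^ j) ≤
        (j + 1) ^ (j + 1) * ((k + 1) * Nat.choose k j) * j ^ j := by
      calc (k + 1) ^ (j + 1) * ((j + 1) * j ^ j)
          = ((k + 1) ^ j * j ^ j) * ((k + 1) * (j + 1)) := by ring
        _ ≤ ((j + 1) ^ j * k ^ j) * ((k + 1) * (j + 1)) := by
            exact Nat.mul_le_mul_right _ hpow
        _ = (j + 1) ^ (j + 1) * (k + 1) * k ^ j := by ring
        _ ≤ (j + 1) ^ (j + 1) * (k + 1) * (j ^ j * Nat.choose k j) := by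
            exact Nat.mul_le_mul_left _ ih'
        _ = (j + 1) ^ (j + 1) * ((k + 1) * Nat.choose k j) * j ^ j := by ring
    rw [hid] at key
    have key2 : (k + 1) ^ (j + 1) * ((j + 1) * j ^ j) ≤
        ((j + 1) ^ (j + 1) * Nat.choose (k + 1) (j + 1)) * ((j + 1) * j ^ j) := by
      calc (k + 1) ^ (j + 1) * ((j + 1) * j ^ j) ≤
          (j + 1) ^ (j + 1) * (Nat.choose (k + 1) (j + 1) * (j + 1)) * j ^ j := key
        _ = ((j + 1) ^ (j + 1) * Nat.choose (k + 1) (j + 1)) * ((j + 1) * j ^ j) := by ring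
    have hpos : 0 < (j + 1) * j ^ j := by
      have : 0 < j ^ j := by
        rcases Nat.eq_zero_or_pos j with h | h
        · subst h; simp
        · positivity
      positivity
    exact Nat.le_of_mul_le_mul_right key2 hpos

set_option maxHeartbeats 1600000 in
/-- Let `n` be even, `k = n/2`, and `j` a positive integer with `η := j/n ≤ 1/10`.
If `i ∈ [k]` satisfies `⌈(k-i)/2⌉ < j`, then
`binom(k-i, ⌈(k-i)/2⌉) / binom(k,j) ≤ (1 - η/2)^i`. -/
theorem johnson_case_one (n k j i : ℕ) (hn : Even n) (hnpos : 0 < n) (hk : k = n / 2)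
    (hjpos : 0 < j) (hη : (j : ℝ) / n ≤ 1 / 10)
    (hi1 : 1 ≤ i) (hik : i ≤ k) (hcase : (k - i + 1) / 2 < j) :
    ((k - i).choose ((k - i + 1) / 2) : ℝ) / (k.choose j) ≤
      (1 - ((j : ℝ) / n) / 2) ^ i := by
  obtain ⟨r, hr⟩ := hn
  have hnk : 2 * k = n := by omega
  -- basic real facts
  have hn0 : (0 : ℝ) < n := by exact_mod_cast hnpos
  set x : ℝ := (j : ℝ) / n with hxdef
  have hx0 : 0 < x := div_pos (by exact_mod_cast hjpos) hn0
  have hx10 : x ≤ 1 / 10 := hη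
  have hkR : (k : ℝ) = n / 2 := by
    have hnk' : k * 2 = n := by omega
    field_simp
    exact_mod_cast hnk' 
  have hjR : (j : ℝ) = x * n := by
    rw [hxdef]; field_simp
  -- nat inequalities
  have h10j : 10 * j ≤ n := by
    have : (10 : ℝ) * j ≤ n := by
      rw [div_le_div_iff₀ hn0 (by norm_num)] at hη
      linarith
    exact_mod_cast this
  have h2jk : 2 * j ≤ k := by omega
  have hjk : j ≤ k := by omega
  have hki2j : k + 2 ≤ i + 2 * j := by omega
  set m : ℕ := k - i with hmdef
  have hmR : (m : ℝ) = (k : ℝ) - i := by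
    have : (m : ℕ) + i = k := by omega
    push_cast [← this]; ring
  -- log facts
  set A : ℝ := 1 - x / 2 with hAdef
  have hA0 : 0 < A := by rw [hAdef]; linarith
  have hA1 : A ≤ 1 := by rw [hAdef]; linarith
  set LA : ℝ := Real.log A with hLAdef
  set L2 : ℝ := Real.log 2 with hL2def
  have hL2a : (1 : ℝ) / 2 ≤ L2 := by
    have := Real.one_sub_inv_le_log_of_pos (by norm_num : (0:ℝ) < 2)
    rw [hL2def]; norm_num at this ⊢; linarith
  have hLA0 : LA ≤ 0 := Real.log_nonpos hA0.le hA1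
  have hLAlb : -(10 * x / 19) ≤ LA := by
    have h1 : 1 - A⁻¹ ≤ LA := Real.one_sub_inv_le_log_of_pos hA0
    have hAinv : A⁻¹ ≤ 1 + 10 * x / 19 := by
      rw [inv_eq_one_div, div_le_iff₀ hA0, hAdef]
      nlinarith [mul_nonneg hx0.le (show (0:ℝ) ≤ 1/10 - x by linarith)]
    linarith
  have h2x0 : (0 : ℝ) < 2 * x := by linarith
  have h8x0 : (0 : ℝ) < 8 * x := by linarith
  have hL8 : Real.log (8 * x) ≤ 10 * x - 6 / 5 := by
    have h1 : Real.log (10 * x) ≤ 10 * x - 1 :=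
      Real.log_le_sub_one_of_pos (by linarith)
    have h2 : (1 : ℝ) - (5 / 4 : ℝ)⁻¹ ≤ Real.log (5 / 4) :=
      Real.one_sub_inv_le_log_of_pos (by norm_num)
    have h3 : Real.log (8 * x) = Real.log (10 * x) - Real.log (5 / 4) := by
      rw [← Real.log_div (by linarith) (by norm_num)]
      norm_num
      ring_nf
    rw [h3]
    norm_num at h2
    linarith
  -- the key analytic inequality, scaled by n
  have hkey : (j : ℝ) * Real.log (8 * x) ≤ ((k : ℝ) - 2 * j) * LA := by
    have hcore : x * Real.log (8 * x) ≤ (1 / 2 - 2 * x) * LA := by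
      have h12x : (0 : ℝ) ≤ 1 / 2 - 2 * x := by linarith
      have hL : x * Real.log (8 * x) ≤ x * (10 * x - 6 / 5) :=
        mul_le_mul_of_nonneg_left hL8 hx0.le
      have hR : (1 / 2 - 2 * x) * (-(10 * x / 19)) ≤ (1 / 2 - 2 * x) * LA :=
        mul_le_mul_of_nonneg_left hLAlb h12x
      nlinarith [mul_nonneg hx0.le (show (0:ℝ) ≤ 1/10 - x by linarith)]
    have : (n : ℝ) * (x * Real.log (8 * x)) ≤ (n : ℝ) * ((1 / 2 - 2 * x) * LA) :=
      mul_le_mul_of_nonneg_left hcore hn0.le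
    calc (j : ℝ) * Real.log (8 * x) = (n : ℝ) * (x * Real.log (8 * x)) := by
          rw [hjR]; ring
      _ ≤ (n : ℝ) * ((1 / 2 - 2 * x) * LA) := this
      _ = ((k : ℝ) - 2 * j) * LA := by rw [hkR, hjR]; ring
  -- main log inequality
  have hmain : (m : ℝ) * L2 + (j : ℝ) * Real.log (2 * x) ≤ (i : ℝ) * LA := by
    have hsplit : Real.log (8 * x) = 2 * L2 + Real.log (2 * x) := by
      rw [show (8 : ℝ) * x = 2 ^ 2 * (2 * x) by ring,
        Real.log_mul (by norm_num) (by linarith), Real.log_pow, hL2def]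
      push_cast; ring
    have hsub : (j : ℝ) * Real.log (2 * x) = (j : ℝ) * Real.log (8 * x) - 2 * j * L2 := by
      rw [hsplit]; ring
    have h1 : (0 : ℝ) ≤ (i : ℝ) + 2 * j - k := by
      have : (k : ℝ) + 2 ≤ (i : ℝ) + 2 * j := by exact_mod_cast hki2j
      linarith
    have h2 : (0 : ℝ) ≤ L2 + LA := by linarith
    have hprod := mul_nonneg h1 h2
    rw [hmR]
    nlinarith [hprod, hkey, hsub]
  -- exponentiate: 2^m * j^j ≤ A^i * k^j
  have hk0 : (0 : ℝ) < (k : ℝ) := by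
    have : 0 < k := by omega
    exact_mod_cast this
  have hj0 : (0 : ℝ) < (j : ℝ) := by exact_mod_cast hjpos
  have h2x : (2 : ℝ) * x = (j : ℝ) / k := by
    rw [hxdef, hkR]; field_simp
  have hexp : (2 : ℝ) ^ m * (j : ℝ) ^ j ≤ A ^ i * (k : ℝ) ^ j := by
    have hL : (0 : ℝ) < (2 : ℝ) ^ m * (j : ℝ) ^ j := by positivity
    have hR : (0 : ℝ) < A ^ i * (k : ℝ) ^ j := by positivity
    rw [← Real.log_le_log_iff hL hR]
    rw [Real.log_mul (by positivity) (by positivity),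
      Real.log_mul (by positivity) (by positivity),
      Real.log_pow, Real.log_pow, Real.log_pow, Real.log_pow]
    have hlogdiv : Real.log (2 * x) = Real.log j - Real.log k := by
      rw [h2x, Real.log_div (ne_of_gt hj0) (ne_of_gt hk0)]
    have := hmain
    rw [hlogdiv] at this
    rw [← hL2def, ← hLAdef]
    nlinarith [this]
  -- assemble
  have hC2 : (0 : ℝ) < (k.choose j : ℝ) := by
    exact_mod_cast Nat.choose_pos hjk
  have hchoose_lb : (k : ℝ) ^ j / (j : ℝ) ^ j ≤ (k.choose j : ℝ) := by
    rw [div_le_iff₀ (by positivity)]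
    have := aux_pow_le_mul_choose j k hjk
    have : ((k : ℕ) : ℝ) ^ j ≤ ((j : ℕ) : ℝ) ^ j * (k.choose j : ℝ) := by
      exact_mod_cast this
    linarith [this]
  have hC1 : (m.choose ((m + 1) / 2) : ℝ) ≤ (2 : ℝ) ^ m := by
    exact_mod_cast aux_choose_le_two_pow m ((m + 1) / 2)
  have hApow : (0 : ℝ) ≤ A ^ i := by positivity
  rw [div_le_iff₀ hC2]
  have step2 : (2 : ℝ) ^ m ≤ A ^ i * ((k : ℝ) ^ j / (j : ℝ) ^ j) := by
    rw [mul_div_assoc', le_div_iff₀ (by positivity : (0:ℝ) < (j:ℝ) ^ j)]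
    linarith [hexp]
  calc (m.choose ((m + 1) / 2) : ℝ) ≤ (2 : ℝ) ^ m := hC1
    _ ≤ A ^ i * ((k : ℝ) ^ j / (j : ℝ) ^ j) := step2
    _ ≤ A ^ i * (k.choose j : ℝ) := mul_le_mul_of_nonneg_left hchoose_lb hApow
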